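/- arXiv:2603.09724 — 5 statements merged into one kernel-verified Lean document; each statement's English description precedes it below -/
import Mathlib

section
/- Let n ≥ 1 and let U ⊆ [0,∞)^n be a set that is closed in ℝ^n. Then E(Min_≺(U)) = E(U); that is, a vector ε ∈ ℝ^n contains no minimal element of U if and only if it contains no element of U at all. -/
/-- Refinement containment: `ε ⪯ ε′` iff `|ε i| ≤ |ε′ i|` for every coordinate. -/
def refCont {ι : Type*} (ε ε' : ι → ℝ) : Prop := ∀ i, |ε i| ≤ |ε' i|

/-- Strict refinement containment: `ε ≺ ε′` iff `ε ⪯ ε′` and `|ε i| < |ε′ i|` for some `i`. -/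
def refSCont {ι : Type*} (ε ε' : ι → ℝ) : Prop := refCont ε ε' ∧ ∃ i, |ε i| < |ε' i|

/-- `Min_≺(R)`: the elements of `R` that strictly contain no element of `R`. -/
def minSet {ι : Type*} (R : Set (ι → ℝ)) : Set (ι → ℝ) :=
  {ε ∈ R | ¬ ∃ ε' ∈ R, refSCont ε' ε}

/-- `E(R)`: the set of refinements containing no refinement of `R`. -/
def eSet {ι : Type*} (R : Set (ι → ℝ)) : Set (ι → ℝ) :=
  {ε | ¬ ∃ ε' ∈ R, refCont ε' ε}

/-- Any element of a closed subset of the nonnegative orthant contains a minimal element. -/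
lemma exists_min_le {n : ℕ} (U : Set (Fin n → ℝ))
    (hU : U ⊆ {x | ∀ i, 0 ≤ x i}) (hclosed : IsClosed U)
    {a : Fin n → ℝ} (ha : a ∈ U) : ∃ μ ∈ minSet U, refCont μ a := by
  set S : Set (Fin n → ℝ) := U ∩ {x | ∀ i, x i ≤ a i} with hS
  have hScl : IsClosed S := by
    apply hclosed.inter
    have : {x : Fin n → ℝ | ∀ i, x i ≤ a i} = ⋂ i, {x | x i ≤ a i} := by
      ext x; simp [Set.mem_iInter]
    rw [this]
    exact isClosed_iInter fun i => isClosed_Iic.preimage (continuous_apply i)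
  have hSsub : S ⊆ Set.Icc (0 : Fin n → ℝ) a := by
    rintro x ⟨hxU, hxle⟩
    exact ⟨fun i => hU hxU i, fun i => hxle i⟩
  have hScompact : IsCompact S := (isCompact_Icc).of_isClosed_subset hScl hSsub
  have hSne : S.Nonempty := ⟨a, ha, fun i => le_refl _⟩
  obtain ⟨μ, hμS, hmin⟩ := hScompact.exists_isMinOn hSne
    (continuous_finset_sum Finset.univ fun i _ => continuous_apply i).continuousOn
  obtain ⟨hμU, hμle⟩ := hμS
  have hμnn : ∀ i, 0 ≤ μ i := fun i => hU hμU i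
  refine ⟨μ, ⟨hμU, ?_⟩, fun i => ?_⟩
  · rintro ⟨y, hyU, hyc, j, hyj⟩
    have hynn : ∀ i, 0 ≤ y i := fun i => hU hyU i
    have hyle : ∀ i, y i ≤ μ i := fun i => by
      have := hyc i; rwa [abs_of_nonneg (hynn i), abs_of_nonneg (hμnn i)] at this
    have hyS : y ∈ S := ⟨hyU, fun i => le_trans (hyle i) (hμle i)⟩
    have hlt : ∑ i, y i < ∑ i, μ i := by
      refine Finset.sum_lt_sum (fun i _ => hyle i) ⟨j, Finset.mem_univ j, ?_⟩
      have := hyj; rwa [abs_of_nonneg (hynn j), abs_of_nonneg (hμnn j)] at this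
    exact absurd (hmin hyS) (not_le.mpr hlt)
  · rw [abs_of_nonneg (hμnn i), abs_of_nonneg (le_trans (hμnn i) (hμle i))]
    exact hμle i

/-- `E(Min_≺(U)) = E(U)` for closed `U` inside the nonnegative orthant. -/
theorem eSet_minSet_eq {n : ℕ} (hn : 1 ≤ n) (U : Set (Fin n → ℝ))
    (hU : U ⊆ {x | ∀ i, 0 ≤ x i}) (hclosed : IsClosed U) :
    eSet (minSet U) = eSet U := by
  ext ε
  simp only [eSet, Set.mem_setOf_eq, not_iff_not]
  constructor
  · rintro ⟨ε', ⟨hε'U, _⟩, h⟩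
    exact ⟨ε', hε'U, h⟩
  · rintro ⟨ε', hε'U, h⟩
    obtain ⟨μ, hμ, hle⟩ := exists_min_le U hU hclosed hε'U
    exact ⟨μ, hμ, fun i => le_trans (hle i) (h i)⟩
end

section
/- Let n ≥ 1 and let U ⊆ [0,∞)^n be a set that is closed in ℝ^n. Then E(Min_≺(U)) ∩ U = ∅; that is, no element of U lies in the stable zone determined by the boundary Min_≺(U). -/
/-- No element of `U` lies in the stable zone `E(Min_≺(U))`. -/
theorem eSet_minSet_inter_empty {n : ℕ} (hn : 1 ≤ n) (U : Set (Fin n → ℝ))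
    (hU : U ⊆ {x | ∀ i, 0 ≤ x i}) (hclosed : IsClosed U) :
    eSet (minSet U) ∩ U = ∅ := by
  ext u
  simp only [Set.mem_inter_iff, Set.mem_empty_iff_false, iff_false, not_and]
  intro hE hu
  -- S : elements of U contained in u
  set S : Set (Fin n → ℝ) := U ∩ {ε | refCont ε u} with hS
  have huS : u ∈ S := ⟨hu, fun i => le_refl _⟩
  have hSclosed : IsClosed S := by
    refine hclosed.inter ?_
    have : {ε : Fin n → ℝ | refCont ε u} = ⋂ i, {ε : Fin n → ℝ | |ε i| ≤ |u i|} := by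
      ext ε; simp [refCont, Set.mem_iInter]
    rw [this]
    exact isClosed_iInter fun i =>
      isClosed_le ((continuous_apply i).abs) continuous_const
  have hSsub : S ⊆ Set.Icc (fun i => -|u i|) (fun i => |u i|) := by
    intro ε hε
    constructor <;> intro i
    · exact le_trans (neg_le_neg (hε.2 i)) (neg_abs_le (ε i))
    · exact le_trans (le_abs_self _) (hε.2 i)
  have hScompact : IsCompact S := by
    have hIcc : IsCompact (Set.Icc (fun i => -|u i|) (fun i : Fin n => |u i|)) :=
      isCompact_Icc
    exact hIcc.of_isClosed_subset hSclosed hSsub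
  obtain ⟨ε0, hε0S, hmin⟩ := hScompact.exists_isMinOn ⟨u, huS⟩
    (continuous_finset_sum Finset.univ fun i _ => continuous_apply i).continuousOn
  refine hE ⟨ε0, ⟨hε0S.1, ?_⟩, hε0S.2⟩
  rintro ⟨ε', hε'U, hcont, i, hlt⟩
  have hε'S : ε' ∈ S := ⟨hε'U, fun j => (hcont j).trans (hε0S.2 j)⟩
  have hsum : ∑ j, ε' j < ∑ j, ε0 j := by
    refine Finset.sum_lt_sum (fun j _ => ?_) ⟨i, Finset.mem_univ i, ?_⟩
    · have := hcont j
      rwa [abs_of_nonneg (hU hε'U j), abs_of_nonneg (hU hε0S.1 j)] at this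
    · rwa [abs_of_nonneg (hU hε'U i), abs_of_nonneg (hU hε0S.1 i)] at hlt
  exact absurd (hmin hε'S) (not_le.mpr hsum)
end

section
/- Let n ≥ 1, let U ⊆ [0,∞)^n be closed in ℝ^n, let U' ⊆ U, and let RC ⊆ ℝ^n be any set with 0 < λ(RC) < ∞, where λ denotes n-dimensional Lebesgue (outer) measure. Then λ(RC ∩ E(Min_≺(U)))/λ(RC) ≤ λ(RC ∩ E(Min_≺(U')))/λ(RC). -/
open MeasureTheory

/-- Local stability is monotone: if `U' ⊆ U` then the relative volume of the stable
zone of `U` inside `RC` is at most that of the stable zone of `U'`. -/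
theorem stability_mono {n : ℕ} (hn : 1 ≤ n) (U U' : Set (Fin n → ℝ))
    (hU : U ⊆ {x | ∀ i, 0 ≤ x i}) (hclosed : IsClosed U) (hsub : U' ⊆ U)
    (RC : Set (Fin n → ℝ)) (hRC0 : 0 < volume RC) (hRCtop : volume RC < ⊤) :
    volume (RC ∩ eSet (minSet U)) / volume RC ≤
      volume (RC ∩ eSet (minSet U')) / volume RC := by
  have hsubset : eSet (minSet U) ⊆ eSet (minSet U') := by
    intro ε hε
    rintro ⟨ε', ⟨hε'U', hε'nomin⟩, hcont⟩
    have hε'U : ε' ∈ U := hsub hε'U'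
    set K : Set (Fin n → ℝ) := {x | x ∈ U ∧ refCont x ε'} with hKdef
    have hKne : ε' ∈ K := ⟨hε'U, fun i => le_refl _⟩
    have hKclosed : IsClosed K := by
      have h1 : IsClosed {x : Fin n → ℝ | refCont x ε'} := by
        have : {x : Fin n → ℝ | refCont x ε'} = ⋂ i, {x | |x i| ≤ |ε' i|} := by
          ext x; simp [Set.mem_iInter, refCont]
        rw [this]
        exact isClosed_iInter fun i =>
          isClosed_le (continuous_abs.comp (continuous_apply i)) continuous_const
      exact hclosed.inter h1
    have hKsub : K ⊆ Set.pi Set.univ (fun i => Set.Icc (-|ε' i|) (|ε' i|)) := by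
      intro x hx
      intro i _
      exact abs_le.mp (hx.2 i)
    have hKcompact : IsCompact K :=
      ((isCompact_univ_pi fun i => isCompact_Icc).of_isClosed_subset hKclosed hKsub)
    obtain ⟨m, hmK, hmmin⟩ :=
      hKcompact.exists_isMinOn ⟨ε', hKne⟩
        ((continuous_finset_sum Finset.univ fun i _ =>
          continuous_abs.comp (continuous_apply i)).continuousOn
          (f := fun x : Fin n → ℝ => ∑ i, |x i|))
    have hmU : m ∈ minSet U := by
      refine ⟨hmK.1, ?_⟩
      rintro ⟨u, huU, hucont, i, hui⟩
      have huK : u ∈ K := ⟨huU, fun j => (hucont j).trans (hmK.2 j)⟩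
      have hlt : ∑ j, |u j| < ∑ j, |m j| :=
        Finset.sum_lt_sum (fun j _ => hucont j) ⟨i, Finset.mem_univ i, hui⟩
      exact absurd (hmmin huK) (not_le.mpr hlt)
    exact hε ⟨m, hmU, fun i => (hmK.2 i).trans (hcont i)⟩
  exact ENNReal.div_le_div_right
    (measure_mono (Set.inter_subset_inter_right RC hsubset)) _
end

section
/- Let n ≥ 1, let U ⊆ [0,∞)^n be closed in ℝ^n, let i ∈ [n] be a coordinate, and let c ≥ 0 be such that the vector c·e_i (with value c in coordinate i and 0 elsewhere) belongs to U. Then every ε ∈ ℝ^n with |ε_i| ≥ c satisfies ε ∉ E(Min_≺(U)). -/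
/-- If the single-dimensional refinement of magnitude `c` in coordinate `i` is in `U`
(i.e., is `k`-unstable), then no refinement with magnitude at least `c` in coordinate
`i` lies in the stable zone `E(Min_≺(U))`. -/
theorem single_dim_excludes {n : ℕ} (hn : 1 ≤ n) (U : Set (Fin n → ℝ))
    (hU : U ⊆ {x | ∀ j, 0 ≤ x j}) (hclosed : IsClosed U)
    (i : Fin n) (c : ℝ) (hc : 0 ≤ c)
    (hmem : (fun j => if j = i then c else 0) ∈ U) :
    ∀ ε : Fin n → ℝ, c ≤ |ε i| → ε ∉ eSet (minSet U) := by
  intro ε hεi hE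
  set f : ℝ → (Fin n → ℝ) := fun t j => if j = i then t else 0 with hf
  have hfc : Continuous f := by
    apply continuous_pi
    intro j
    by_cases h : j = i <;> simp [hf, h] <;> fun_prop
  set S : Set ℝ := f ⁻¹' U ∩ Set.Icc 0 c with hS
  have hSclosed : IsClosed S := (hclosed.preimage hfc).inter isClosed_Icc
  have hSne : S.Nonempty := ⟨c, hmem, ⟨hc, le_refl c⟩⟩
  have hSbdd : BddBelow S := ⟨0, fun t ht => ht.2.1⟩
  set t₀ : ℝ := sInf S with ht₀
  have ht₀S : t₀ ∈ S := hSclosed.csInf_mem hSne hSbdd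
  have ht₀0 : 0 ≤ t₀ := ht₀S.2.1
  have ht₀c : t₀ ≤ c := ht₀S.2.2
  apply hE
  refine ⟨f t₀, ⟨ht₀S.1, ?_⟩, ?_⟩
  · rintro ⟨ε', hε'U, hcont, j, hj⟩
    have hzero : ∀ k, k ≠ i → ε' k = 0 := by
      intro k hk
      have := hcont k
      simp [hf, hk] at this
      exact this
    have hε'nonneg := hU hε'U
    have hε'i : ε' i ≤ t₀ := by
      have := hcont i
      simpa [hf, abs_of_nonneg (hε'nonneg i), abs_of_nonneg ht₀0] using this
    have hji : j = i := by
      by_contra hji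
      have := hj
      simp [hf, hji, hzero j hji] at this
    have hlt : ε' i < t₀ := by
      have := hj
      rw [hji] at this
      simpa [hf, abs_of_nonneg (hε'nonneg i), abs_of_nonneg ht₀0] using this
    have heq : ε' = f (ε' i) := by
      funext k
      by_cases h : k = i <;> simp [hf, h, hzero k]
    have : ε' i ∈ S := ⟨show f (ε' i) ∈ U by rw [← heq]; exact hε'U, hε'nonneg i, le_trans hlt.le ht₀c⟩
    exact absurd (csInf_le hSbdd this) (not_le.mpr hlt)
  · intro j
    by_cases h : j = i
    · subst h
      simpa [hf, abs_of_nonneg ht₀0] using le_trans ht₀c hεi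
    · simp [hf, h]
end

section
/- Let S be a finite type with |S| = n, let x ∈ S, let k ∈ ℕ, and let σ, τ : S ≃ Fin n be bijections (rankings, lower position is better) such that for all a, b ∈ S \ {x}: σ(a) < σ(b) if and only if τ(a) < τ(b). Suppose k + 1 ≤ (σ(x) : ℕ) and (σ(x) : ℕ) + k + 1 ≤ n − 1, and let u = σ⁻¹(σ(x) − (k+1)) and d = σ⁻¹(σ(x) + (k+1)). Then |(σ(x) : ℤ) − (τ(x) : ℤ)| ≤ k if and only if τ(u) < τ(x) and τ(x) < τ(d). -/
/-- Correctness of the re-ranking cost optimization: for a tuple-independent change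
(the rankings `σ` and `τ` agree on the relative order of all tuples other than `x`),
the position of `x` changes by at most `k` if and only if `x` still ranks strictly
below the tuple `u` ranked `k+1` positions above it and strictly above the tuple `d`
ranked `k+1` positions below it. -/
theorem rerank_window {S : Type*} [Fintype S] {n : ℕ} (hn : 1 ≤ n)
    (hcard : Fintype.card S = n) (x : S) (k : ℕ) (σ τ : S ≃ Fin n)
    (hrel : ∀ a b : S, a ≠ x → b ≠ x → ((σ a : ℕ) < (σ b : ℕ) ↔ (τ a : ℕ) < (τ b : ℕ)))
    (h1 : k + 1 ≤ (σ x : ℕ)) (h2 : (σ x : ℕ) + k + 1 ≤ n - 1)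
    (u d : S)
    (hu : u = σ.symm ⟨(σ x : ℕ) - (k + 1), by have := (σ x).isLt; omega⟩)
    (hd : d = σ.symm ⟨(σ x : ℕ) + (k + 1), by omega⟩) :
    |((σ x : ℕ) : ℤ) - ((τ x : ℕ) : ℤ)| ≤ (k : ℤ) ↔
      ((τ u : ℕ) < (τ x : ℕ) ∧ (τ x : ℕ) < (τ d : ℕ)) := by
  classical
  have count : ∀ (e : S ≃ Fin n) (a : S),
      (Finset.univ.filter fun b => (e b : ℕ) < (e a : ℕ)).card = (e a : ℕ) := by
    intro e a
    have h : (Finset.univ.filter fun b => (e b : ℕ) < (e a : ℕ))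
        = (Finset.Iio (e a)).map ⟨e.symm, e.symm.injective⟩ := by
      ext b
      simp only [Finset.mem_filter, Finset.mem_univ, true_and, Finset.mem_map,
        Finset.mem_Iio, Function.Embedding.coeFn_mk]
      constructor
      · intro hb; exact ⟨e b, hb, e.symm_apply_apply b⟩
      · rintro ⟨j, hj, rfl⟩; simpa using hj
    rw [h, Finset.card_map, Fin.card_Iio]
  -- split the count at x
  have split : ∀ (e : S ≃ Fin n) (a : S),
      (e a : ℕ) = (Finset.univ.filter fun b => b ≠ x ∧ (e b : ℕ) < (e a : ℕ)).card
        + (if (e x : ℕ) < (e a : ℕ) then 1 else 0) := by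
    intro e a
    have hsplit : (Finset.univ.filter fun b => (e b : ℕ) < (e a : ℕ))
        = (Finset.univ.filter fun b => b ≠ x ∧ (e b : ℕ) < (e a : ℕ))
          ∪ (Finset.univ.filter fun b => b = x ∧ (e b : ℕ) < (e a : ℕ)) := by
      ext b; by_cases hb : b = x <;> simp [hb]
    have hdisj : Disjoint (Finset.univ.filter fun b => b ≠ x ∧ (e b : ℕ) < (e a : ℕ))
        (Finset.univ.filter fun b => b = x ∧ (e b : ℕ) < (e a : ℕ)) := by
      simp only [Finset.disjoint_left, Finset.mem_filter, Finset.mem_univ, true_and]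
      tauto
    have hsingle : (Finset.univ.filter fun b => b = x ∧ (e b : ℕ) < (e a : ℕ)).card
        = if (e x : ℕ) < (e a : ℕ) then 1 else 0 := by
      by_cases hx : (e x : ℕ) < (e a : ℕ)
      · rw [if_pos hx]
        have hset : (Finset.univ.filter fun b => b = x ∧ (e b : ℕ) < (e a : ℕ)) = {x} := by
          ext b; simp only [Finset.mem_filter, Finset.mem_univ, true_and, Finset.mem_singleton]
          constructor
          · tauto
          · rintro rfl; exact ⟨rfl, hx⟩
        rw [hset, Finset.card_singleton]
      · rw [if_neg hx]
        have hset : (Finset.univ.filter fun b => b = x ∧ (e b : ℕ) < (e a : ℕ)) = ∅ := by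
          ext b; simp only [Finset.mem_filter, Finset.mem_univ, true_and,
            Finset.notMem_empty, iff_false]
          rintro ⟨rfl, h⟩; exact hx h
        rw [hset, Finset.card_empty]
    have hsum : (Finset.univ.filter fun b => (e b : ℕ) < (e a : ℕ)).card
        = (Finset.univ.filter fun b => b ≠ x ∧ (e b : ℕ) < (e a : ℕ)).card
          + (if (e x : ℕ) < (e a : ℕ) then 1 else 0) := by
      rw [hsplit, Finset.card_union_of_disjoint hdisj, hsingle]
    rw [count e a] at hsum
    exact hsum
  -- equality of the off-x counts
  have same : ∀ a : S, a ≠ x →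
      (Finset.univ.filter fun b => b ≠ x ∧ (σ b : ℕ) < (σ a : ℕ)).card
        = (Finset.univ.filter fun b => b ≠ x ∧ (τ b : ℕ) < (τ a : ℕ)).card := by
    intro a ha
    congr 1
    apply Finset.filter_congr
    intro b _
    by_cases hb : b = x
    · simp [hb]
    · simp only [hb, ne_eq, not_false_eq_true, true_and]
      exact hrel b a hb ha
  -- facts about u and d
  have hσu : (σ u : ℕ) = (σ x : ℕ) - (k + 1) := by rw [hu, Equiv.apply_symm_apply]
  have hσd : (σ d : ℕ) = (σ x : ℕ) + (k + 1) := by rw [hd, Equiv.apply_symm_apply]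
  have hux : u ≠ x := by intro h; rw [h] at hσu; omega
  have hdx : d ≠ x := by intro h; rw [h] at hσd; omega
  have hτux : (τ u : ℕ) ≠ (τ x : ℕ) := fun h => hux (τ.injective (Fin.val_injective h))
  have hτdx : (τ d : ℕ) ≠ (τ x : ℕ) := fun h => hdx (τ.injective (Fin.val_injective h))
  have hsu := split σ u
  have htu := split τ u
  have hsd := split σ d
  have htd := split τ d
  rw [same u hux] at hsu
  rw [same d hdx] at hsd
  have i1 : ¬ ((σ x : ℕ) < (σ u : ℕ)) := by omega
  have i2 : (σ x : ℕ) < (σ d : ℕ) := by omega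
  rw [if_neg i1] at hsu
  rw [if_pos i2] at hsd
  have htu2 : ((τ x : ℕ) < (τ u : ℕ) ∧ (τ u : ℕ)
        = (Finset.univ.filter fun b => b ≠ x ∧ (τ b : ℕ) < (τ u : ℕ)).card + 1)
      ∨ (¬ ((τ x : ℕ) < (τ u : ℕ)) ∧ (τ u : ℕ)
        = (Finset.univ.filter fun b => b ≠ x ∧ (τ b : ℕ) < (τ u : ℕ)).card) := by
    by_cases hq : (τ x : ℕ) < (τ u : ℕ)
    · rw [if_pos hq] at htu; exact Or.inl ⟨hq, htu⟩
    · rw [if_neg hq] at htu; exact Or.inr ⟨hq, by omega⟩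
  have htd2 : ((τ x : ℕ) < (τ d : ℕ) ∧ (τ d : ℕ)
        = (Finset.univ.filter fun b => b ≠ x ∧ (τ b : ℕ) < (τ d : ℕ)).card + 1)
      ∨ (¬ ((τ x : ℕ) < (τ d : ℕ)) ∧ (τ d : ℕ)
        = (Finset.univ.filter fun b => b ≠ x ∧ (τ b : ℕ) < (τ d : ℕ)).card) := by
    by_cases hq : (τ x : ℕ) < (τ d : ℕ)
    · rw [if_pos hq] at htd; exact Or.inl ⟨hq, htd⟩
    · rw [if_neg hq] at htd; exact Or.inr ⟨hq, by omega⟩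
  rw [abs_le]
  omega
end
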